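/- Let μ_N be the unique stationary state of L_N on Ω_N and ρ_N(k) = E_{μ_N}[η_k]. Then for all k ∈ Λ_N = {1, …, N−1}: ρ_N(k) = ((N−k)/(N−1)) ρ_N(1) + ((k−1)/(N−1)) β. -/

import Mathlib

open Finset Filter Topology

/-- Occupation value of a site. -/
def occ (b : Bool) : ℝ := if b then 1 else 0

/-- Flip the occupation variable at site `i`. -/
def flipCfg {m : ℕ} (η : Fin m → Bool) (i : Fin m) : Fin m → Bool :=
  Function.update η i (!(η i))

/-- Exchange the occupation variables at sites `i` and `j`. -/
def swapCfg {m : ℕ} (η : Fin m → Bool) (i j : Fin m) : Fin m → Bool :=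
  fun k => η (Equiv.swap i j k)

/-- A stationary state of a generator `L` on a finite set `S`. -/
def IsStationaryGen {S : Type*} [Fintype S] (L : (S → ℝ) → S → ℝ) (μ : S → ℝ) : Prop :=
  (∀ x, 0 ≤ μ x) ∧ (∑ x, μ x = 1) ∧ ∀ f : S → ℝ, ∑ x, μ x * L f x = 0

/-- Expectation of `g` under the (finitely supported) measure `μ`. -/
def expVal {S : Type*} [Fintype S] (μ : S → ℝ) (g : S → ℝ) : ℝ := ∑ x, μ x * g x

/- The sites of `Λ_N = {1, …, N-1}` are indexed by `Fin (N-1)`, the index `i`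
corresponding to the site `i + 1`. -/

/-- The projection `η ↦ (η_1, …, η_p)` on the first `p` coordinates. -/
def projCfg (N p : ℕ) (hpN : p < N) (η : Fin (N-1) → Bool) : Fin p → Bool :=
  fun i => η ⟨i.1, by have := i.isLt; omega⟩

/-- Left boundary generator: `(L_l f)(η) = c(η_1, …, η_p)[f(σ¹η) − f(η)]`. -/
def Lleft (N p : ℕ) (hp : 1 ≤ p) (hpN : p < N) (c : (Fin p → Bool) → ℝ)
    (f : (Fin (N-1) → Bool) → ℝ) (η : Fin (N-1) → Bool) : ℝ :=
  c (projCfg N p hpN η) * (f (flipCfg η ⟨0, by omega⟩) - f η)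

/-- Symmetric exclusion in the bulk (exchanges at `(k, k+1)`, `1 ≤ k ≤ N-2`). -/
def Lbulk (N : ℕ) (f : (Fin (N-1) → Bool) → ℝ) (η : Fin (N-1) → Bool) : ℝ :=
  ∑ k : Fin (N-2),
    (f (swapCfg η ⟨k.1, by have := k.isLt; omega⟩ ⟨k.1 + 1, by have := k.isLt; omega⟩) - f η)

/-- Right reservoir at density `β`, acting on the site `N-1`. -/
def Lright (N : ℕ) (hN : 2 ≤ N) (β : ℝ)
    (f : (Fin (N-1) → Bool) → ℝ) (η : Fin (N-1) → Bool) : ℝ :=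
  (β * (1 - occ (η ⟨N - 2, by omega⟩)) + (1 - β) * occ (η ⟨N - 2, by omega⟩)) *
    (f (flipCfg η ⟨N - 2, by omega⟩) - f η)

/-- The full generator `L_N = L_l + L_{b,N} + L_{r,N}`. -/
def LN (N p : ℕ) (hp : 1 ≤ p) (hpN : p < N) (c : (Fin p → Bool) → ℝ) (β : ℝ)
    (f : (Fin (N-1) → Bool) → ℝ) (η : Fin (N-1) → Bool) : ℝ :=
  Lleft N p hp hpN c f η + Lbulk N f η + Lright N (by omega) β f η

/-- The configuration `(a, ξ) ∈ {0,1}^p` obtained by prepending `a` to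
`ξ ∈ Ω_p = {0,1}^{p-1}`. -/
def consCfg (p : ℕ) (a : Bool) (ξ : Fin (p-1) → Bool) : Fin p → Bool :=
  fun i => if h : i.1 = 0 then a else ξ ⟨i.1 - 1, by have := i.isLt; omega⟩

lemma occ_not (b : Bool) : occ (!b) = 1 - occ b := by cases b <;> simp [occ]

lemma flip_noteq {m : ℕ} (η : Fin m → Bool) (i x : Fin m) (h : x ≠ i) :
    flipCfg η i x = η x := by
  unfold flipCfg
  exact Function.update_of_ne h _ _

lemma right_apply (m : ℕ) (η : Fin m → Bool) (i : Fin m) (β : ℝ) :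
    (β * (1 - occ (η i)) + (1 - β) * occ (η i)) * (occ (flipCfg η i i) - occ (η i))
      = β - occ (η i) := by
  unfold flipCfg
  rw [Function.update_self, occ_not]
  rcases Bool.dichotomy (η i) with hb | hb <;> rw [hb] <;> simp [occ] <;> ring

lemma sum_ind (n : ℕ) (j : ℕ) (A : ℝ) :
    (∑ k : Fin n, (if (k : ℕ) = j then A else 0)) = if j < n then A else 0 := by
  rcases lt_or_ge j n with h | h
  · rw [if_pos h, Finset.sum_eq_single (⟨j, h⟩ : Fin n)]
    · simp
    · intro b _ hb
      rw [if_neg]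
      intro hc
      exact hb (Fin.ext hc)
    · simp
  · rw [if_neg (by omega)]
    apply Finset.sum_eq_zero
    intro k _
    rw [if_neg (by have := k.isLt; omega)]

lemma expVal_split {S : Type*} [Fintype S] (μ A B C : S → ℝ)
    (hs : ∑ x, μ x * (A x - 2 * B x + C x) = 0) :
    expVal μ A - 2 * expVal μ B + expVal μ C = 0 := by
  unfold expVal
  have h2 : ∑ x, μ x * (A x - 2 * B x + C x)
      = ∑ x, (μ x * A x - 2 * (μ x * B x) + μ x * C x) :=
    Finset.sum_congr rfl (fun x _ => by ring)
  rw [h2, Finset.sum_add_distrib, Finset.sum_sub_distrib, ← Finset.mul_sum] at hs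
  linarith

lemma key_rec (N p : ℕ) (hp : 1 ≤ p) (hpN : p < N) (β : ℝ)
    (c : (Fin p → Bool) → ℝ)
    (μ : (Fin (N-1) → Bool) → ℝ) (hμ : IsStationaryGen (LN N p hp hpN c β) μ)
    (j : ℕ) (hj1 : 1 ≤ j) (hj2 : j < N - 1) :
    (if h : j - 1 < N - 1 then expVal μ (fun η => occ (η ⟨j - 1, h⟩)) else β)
      - 2 * (if h : j < N - 1 then expVal μ (fun η => occ (η ⟨j, h⟩)) else β)
      + (if h : j + 1 < N - 1 then expVal μ (fun η => occ (η ⟨j + 1, h⟩)) else β) = 0 := by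
  obtain ⟨hpos, hsum, hstat⟩ := hμ
  have pjm : j - 1 < N - 1 := by omega
  have h0 := hstat (fun η => occ (η ⟨j, hj2⟩))
  have hpt : ∀ η : Fin (N-1) → Bool,
      LN N p hp hpN c β (fun η => occ (η ⟨j, hj2⟩)) η
        = occ (η ⟨j - 1, pjm⟩) - 2 * occ (η ⟨j, hj2⟩)
          + (if h : j + 1 < N - 1 then occ (η ⟨j + 1, h⟩) else β) := by
    intro η
    have hleft : Lleft N p hp hpN c (fun η => occ (η ⟨j, hj2⟩)) η = 0 := by
      show c (projCfg N p hpN η)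
          * (occ (flipCfg η ⟨0, by omega⟩ ⟨j, hj2⟩) - occ (η ⟨j, hj2⟩)) = 0
      rw [flip_noteq _ _ _ (by simp only [ne_eq, Fin.mk.injEq]; omega)]
      ring
    have hbulk : Lbulk N (fun η => occ (η ⟨j, hj2⟩)) η
        = (if h : j + 1 < N - 1 then
            occ (η ⟨j - 1, pjm⟩) - 2 * occ (η ⟨j, hj2⟩) + occ (η ⟨j + 1, h⟩)
          else occ (η ⟨j - 1, pjm⟩) - occ (η ⟨j, hj2⟩)) := by
      unfold Lbulk
      have hterm : ∀ k : Fin (N-2),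
          occ (swapCfg η ⟨k.1, by have := k.isLt; omega⟩
                ⟨k.1 + 1, by have := k.isLt; omega⟩ ⟨j, hj2⟩) - occ (η ⟨j, hj2⟩)
            = (if (k : ℕ) = j then
                (if h : j + 1 < N - 1 then occ (η ⟨j + 1, h⟩) else 0) - occ (η ⟨j, hj2⟩)
               else 0)
              + (if (k : ℕ) = j - 1 then occ (η ⟨j - 1, pjm⟩) - occ (η ⟨j, hj2⟩) else 0) := by
        intro k
        have pk : (k : ℕ) < N - 1 := by have := k.isLt; omega
        have pk1 : (k : ℕ) + 1 < N - 1 := by have := k.isLt; omega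
        show occ (swapCfg η ⟨(k : ℕ), pk⟩ ⟨(k : ℕ) + 1, pk1⟩ ⟨j, hj2⟩) - occ (η ⟨j, hj2⟩) = _
        by_cases h1 : (k : ℕ) = j
        · have hjlt : j + 1 < N - 1 := by have := k.isLt; omega
          rw [if_pos h1, if_neg (by omega), dif_pos hjlt, add_zero]
          have hswap : Equiv.swap (⟨(k : ℕ), pk⟩ : Fin (N-1)) ⟨(k : ℕ) + 1, pk1⟩ ⟨j, hj2⟩
              = ⟨j + 1, hjlt⟩ := by
            have hax : (⟨j, hj2⟩ : Fin (N-1)) = ⟨(k : ℕ), pk⟩ := by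
              simp only [Fin.mk.injEq]; omega
            rw [hax, Equiv.swap_apply_left]
            simp only [Fin.mk.injEq]; omega
          unfold swapCfg
          rw [hswap]
        · by_cases h2 : (k : ℕ) = j - 1
          · rw [if_neg h1, if_pos h2, zero_add]
            have hswap : Equiv.swap (⟨(k : ℕ), pk⟩ : Fin (N-1)) ⟨(k : ℕ) + 1, pk1⟩ ⟨j, hj2⟩
                = ⟨j - 1, pjm⟩ := by
              have hbx : (⟨j, hj2⟩ : Fin (N-1)) = ⟨(k : ℕ) + 1, pk1⟩ := by
                simp only [Fin.mk.injEq]; omega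
              rw [hbx, Equiv.swap_apply_right]
              simp only [Fin.mk.injEq]; omega
            unfold swapCfg
            rw [hswap]
          · rw [if_neg h1, if_neg h2]
            have hswap : Equiv.swap (⟨(k : ℕ), pk⟩ : Fin (N-1)) ⟨(k : ℕ) + 1, pk1⟩ ⟨j, hj2⟩
                = ⟨j, hj2⟩ := by
              apply Equiv.swap_apply_of_ne_of_ne
              · simp only [ne_eq, Fin.mk.injEq]; omega
              · simp only [ne_eq, Fin.mk.injEq]; omega
            unfold swapCfg
            rw [hswap]
            ring
      rw [Finset.sum_congr rfl (fun k _ => hterm k), Finset.sum_add_distrib,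
        sum_ind, sum_ind]
      rw [if_pos (show j - 1 < N - 2 by omega)]
      split_ifs with h1 h2 h3 <;> first | ring1 | (exfalso; omega)
    have hright : Lright N (by omega) β (fun η => occ (η ⟨j, hj2⟩)) η
        = (if j + 1 < N - 1 then 0 else β - occ (η ⟨j, hj2⟩)) := by
      by_cases h : j + 1 < N - 1
      · rw [if_pos h]
        show (β * (1 - occ (η ⟨N - 2, by omega⟩)) + (1 - β) * occ (η ⟨N - 2, by omega⟩))
            * (occ (flipCfg η ⟨N - 2, by omega⟩ ⟨j, hj2⟩) - occ (η ⟨j, hj2⟩)) = 0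
        rw [flip_noteq _ _ _ (by simp only [ne_eq, Fin.mk.injEq]; omega)]
        ring
      · rw [if_neg h]
        have hje : (⟨j, hj2⟩ : Fin (N-1)) = ⟨N - 2, by omega⟩ := by
          simp only [Fin.mk.injEq]; omega
        rw [hje]
        exact right_apply (N-1) η ⟨N - 2, by omega⟩ β
    show Lleft N p hp hpN c (fun η => occ (η ⟨j, hj2⟩)) η
        + Lbulk N (fun η => occ (η ⟨j, hj2⟩)) η
        + Lright N (by omega) β (fun η => occ (η ⟨j, hj2⟩)) η = _
    rw [hleft, hbulk, hright]
    split_ifs with h <;> ring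
  have hsplit := expVal_split μ (fun η => occ (η ⟨j - 1, pjm⟩))
      (fun η => occ (η ⟨j, hj2⟩))
      (fun η => if h : j + 1 < N - 1 then occ (η ⟨j + 1, h⟩) else β)
      (by
        rw [← h0]
        exact Finset.sum_congr rfl (fun η _ => by rw [hpt η]))
  rw [dif_pos pjm, dif_pos hj2]
  by_cases h : j + 1 < N - 1
  · rw [dif_pos h]
    have hC : (fun η : Fin (N-1) → Bool =>
        if h' : j + 1 < N - 1 then occ (η ⟨j + 1, h'⟩) else β)
          = (fun η => occ (η ⟨j + 1, h⟩)) := by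
      funext η
      rw [dif_pos h]
    rw [hC] at hsplit
    exact hsplit
  · rw [dif_neg h]
    have hC : (fun η : Fin (N-1) → Bool =>
        if h' : j + 1 < N - 1 then occ (η ⟨j + 1, h'⟩) else β)
          = (fun _ => β) := by
      funext η
      rw [dif_neg h]
    rw [hC] at hsplit
    have hcb : expVal μ (fun _ : Fin (N-1) → Bool => β) = β := by
      unfold expVal
      rw [← Finset.sum_mul, hsum, one_mul]
    rw [hcb] at hsplit
    exact hsplit

lemma lin_of_rec (M : ℕ) (R : ℕ → ℝ)
    (hrec : ∀ j, 1 ≤ j → j < M → R (j+1) = 2 * R j - R (j-1)) :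
    ∀ j, j ≤ M → R j = R 0 + j * (R 1 - R 0) := by
  intro j
  induction j using Nat.strong_induction_on with
  | _ j ih =>
    intro hj
    match j with
    | 0 => simp
    | 1 => push_cast; ring
    | (i+2) =>
      have h1 := ih (i+1) (by omega) (by omega)
      have h0 := ih i (by omega) (by omega)
      have hr := hrec (i+1) (by omega) (by omega)
      simp only [Nat.add_sub_cancel] at hr
      rw [hr, h1, h0]
      push_cast
      ring

/-- the stationary density profile interpolates linearly between
`ρ_N(1)` and `β`: `ρ_N(k) = ((N−k)/(N−1)) ρ_N(1) + ((k−1)/(N−1)) β`. -/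
theorem stmt12 (N p : ℕ) (hp : 1 ≤ p) (hpN : p < N) (β : ℝ) (hβ0 : 0 < β) (hβ1 : β < 1)
    (c : (Fin p → Bool) → ℝ) (hc : ∀ ξ, 0 ≤ c ξ)
    (μ : (Fin (N-1) → Bool) → ℝ) (hμ : IsStationaryGen (LN N p hp hpN c β) μ) :
    ∀ (k : ℕ) (hk1 : 1 ≤ k) (hk2 : k ≤ N - 1),
      expVal μ (fun η => occ (η ⟨k - 1, by omega⟩))
        = ((N : ℝ) - k) / ((N : ℝ) - 1) * expVal μ (fun η => occ (η ⟨0, by omega⟩))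
          + ((k : ℝ) - 1) / ((N : ℝ) - 1) * β := by
  intro k hk1 hk2
  have hN2 : 2 ≤ N := by omega
  set R : ℕ → ℝ := fun j =>
    if h : j < N - 1 then expVal μ (fun η => occ (η ⟨j, h⟩)) else β with hRdef
  have hrec : ∀ j, 1 ≤ j → j < N - 1 → R (j+1) = 2 * R j - R (j-1) := by
    intro j hj1 hj2
    have hk := key_rec N p hp hpN β c μ hμ j hj1 hj2
    simp only [hRdef]
    linarith
  have hL := lin_of_rec (N-1) R hrec
  have hβ : β = R 0 + ((N:ℝ) - 1) * (R 1 - R 0) := by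
    have h1 := hL (N-1) le_rfl
    have h2 : R (N-1) = β := by
      simp only [hRdef]
      rw [dif_neg (by omega)]
    rw [h2] at h1
    rw [h1]
    congr 1
    congr 1
    push_cast [Nat.cast_sub (by omega : 1 ≤ N)]
    ring
  have hLHS : expVal μ (fun η => occ (η ⟨k - 1, by omega⟩)) = R (k-1) := by
    simp only [hRdef]
    rw [dif_pos (show k - 1 < N - 1 by omega)]
  have h0 : expVal μ (fun η => occ (η ⟨0, by omega⟩)) = R 0 := by
    simp only [hRdef]
    rw [dif_pos (show 0 < N - 1 by omega)]
  have hk' := hL (k-1) (by omega)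
  rw [hLHS, h0, hk']
  have hcast : ((k-1 : ℕ) : ℝ) = (k : ℝ) - 1 := by
    push_cast [Nat.cast_sub hk1]
    ring
  rw [hcast]
  have hne : (N : ℝ) - 1 ≠ 0 := by
    have : (2 : ℝ) ≤ (N : ℝ) := by exact_mod_cast hN2
    linarith
  rw [hβ]
  field_simp
  ring
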